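/- The generating series satisfies the boundary relation: (I − wA^(3) + w²A^(2) − w³A^(1) + w⁴I) · P_Γ(t,u,w) = (1 − tw + uw² − t⁻¹uw) Σ_{p,q} v_{p,q,0} t^p u^q + t⁻¹uw Σ_q v_{0,q,0} u^q, as an identity of formal power series in u, w and Laurent series in t. -/
import Mathlib


open Matrix

/-- The generating series `P_Γ(t,u,w) = Σ v_{p,q,r} t^p u^q w^r` satisfies
`(I − wA3 + w²A2 − w³A1 + w⁴I)·P_Γ = (1 − tw + uw² − t⁻¹uw) Σ_{p,q} v_{p,q,0} t^p u^q
+ t⁻¹uw Σ_q v_{0,q,0} u^q`, as an identity of formal power series in `u, w` and Laurent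
series in `t`.  The identity is stated coefficientwise (which is what equality of formal
(Laurent) series means): for every `(p,q,r) ∈ ℤ³` the coefficient of `t^p u^q w^r` on
both sides agree, `v` being zero on negative indices. -/
theorem key_relation_boundary {l : ℕ}
    (A1 A2 A3 : Matrix (Fin (l + 1)) (Fin (l + 1)) ℂ)
    (v : ℤ → ℤ → ℤ → (Fin (l + 1) → ℂ))
    (hneg : ∀ p q r, (p < 0 ∨ q < 0 ∨ r < 0) → v p q r = 0)
    (hrec1 : ∀ (p q r : ℤ), 0 ≤ p → 0 ≤ q → 0 ≤ r →
      A1 *ᵥ v p q r = v (p + 1) q r + v p q (r - 1) + v (p - 1) (q + 1) r +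
        v p (q - 1) (r + 1))
    (hrec2 : ∀ (p q r : ℤ), 0 ≤ p → 0 ≤ q → 0 ≤ r →
      A2 *ᵥ v p q r = v p (q + 1) r + v p (q - 1) r + v (p + 1) (q - 1) (r + 1) +
        v (p - 1) (q + 1) (r - 1) + v (p - 1) q (r + 1) + v (p + 1) q (r - 1))
    (hrec3 : ∀ (p q r : ℤ), 0 ≤ p → 0 ≤ q → 0 ≤ r →
      A3 *ᵥ v p q r = v p q (r + 1) + v (p - 1) q r + v p (q + 1) (r - 1) +
        v (p + 1) (q - 1) r) :
    ∀ (p q r : ℤ),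
      v p q r - A3 *ᵥ v p q (r - 1) + A2 *ᵥ v p q (r - 2) - A1 *ᵥ v p q (r - 3) +
          v p q (r - 4) =
        (if r = 0 then v p q 0 else 0) +
        (if r = 1 then -(v (p - 1) q 0) - v (p + 1) (q - 1) 0 +
          (if p = -1 then v 0 (q - 1) 0 else 0) else 0) +
        (if r = 2 then v p (q - 1) 0 else 0) := by
  intro p q r
  rcases lt_or_ge p 0 with hp | hp
  · -- p < 0 : everything on the left vanishes
    rw [hneg p q r (Or.inl hp), hneg p q (r-1) (Or.inl hp), hneg p q (r-2) (Or.inl hp),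
      hneg p q (r-3) (Or.inl hp), hneg p q (r-4) (Or.inl hp)]
    simp only [Matrix.mulVec_zero]
    rw [hneg (p-1) q 0 (Or.inl (by omega)), hneg p q 0 (Or.inl hp),
      hneg p (q-1) 0 (Or.inl hp)]
    rcases eq_or_ne p (-1) with hp1 | hp1
    · subst hp1
      simp only [if_pos rfl]
      norm_num
    · rw [if_neg hp1, hneg (p+1) (q-1) 0 (Or.inl (by omega))]
      norm_num
  rcases lt_or_ge q 0 with hq | hq
  · -- q < 0
    rw [hneg p q r (Or.inr (Or.inl hq)), hneg p q (r-1) (Or.inr (Or.inl hq)),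
      hneg p q (r-2) (Or.inr (Or.inl hq)), hneg p q (r-3) (Or.inr (Or.inl hq)),
      hneg p q (r-4) (Or.inr (Or.inl hq))]
    simp only [Matrix.mulVec_zero]
    rw [hneg (p-1) q 0 (Or.inr (Or.inl hq)), hneg p q 0 (Or.inr (Or.inl hq)),
      hneg p (q-1) 0 (Or.inr (Or.inl (by omega))),
      hneg (p+1) (q-1) 0 (Or.inr (Or.inl (by omega))),
      hneg 0 (q-1) 0 (Or.inr (Or.inl (by omega)))]
    simp
  -- now p ≥ 0 and q ≥ 0
  rcases lt_or_ge r 0 with hr | hr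
  · rw [hneg p q r (Or.inr (Or.inr hr)), hneg p q (r-1) (Or.inr (Or.inr (by omega))),
      hneg p q (r-2) (Or.inr (Or.inr (by omega))), hneg p q (r-3) (Or.inr (Or.inr (by omega))),
      hneg p q (r-4) (Or.inr (Or.inr (by omega)))]
    simp only [Matrix.mulVec_zero]
    rw [if_neg (by omega), if_neg (by omega : ¬ r = 1), if_neg (by omega : ¬ r = 2)]
    simp
  rcases eq_or_lt_of_le hr with h0 | hr
  · -- r = 0
    subst h0
    norm_num
    rw [hneg p q (-1) (by omega), hneg p q (-2) (by omega), hneg p q (-3) (by omega),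
      hneg p q (-4) (by omega)]
    simp
  rcases eq_or_lt_of_le (by omega : (1:ℤ) ≤ r) with h1 | hr
  · -- r = 1
    subst h1
    norm_num
    have e3 := hrec3 p q 0 hp hq le_rfl
    norm_num at e3
    rw [e3, hneg p q (-1) (by omega), hneg p q (-2) (by omega), hneg p q (-3) (by omega),
      hneg p (q+1) (-1) (by omega)]
    simp only [Matrix.mulVec_zero]
    rw [if_neg (by omega : ¬ p = -1)]
    abel
  rcases eq_or_lt_of_le (by omega : (2:ℤ) ≤ r) with h2 | hr
  · -- r = 2
    subst h2
    norm_num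
    have e3 := hrec3 p q 1 hp hq (by norm_num)
    have e2 := hrec2 p q 0 hp hq le_rfl
    norm_num at e3 e2
    rw [e3, e2, hneg p q (-1) (by omega), hneg p q (-2) (by omega),
      hneg (p-1) (q+1) (-1) (by omega), hneg (p+1) q (-1) (by omega)]
    simp only [Matrix.mulVec_zero]
    abel
  rcases eq_or_lt_of_le (by omega : (3:ℤ) ≤ r) with h3 | hr
  · -- r = 3
    subst h3
    norm_num
    have e3 := hrec3 p q 2 hp hq (by norm_num)
    have e2 := hrec2 p q 1 hp hq (by norm_num)
    have e1 := hrec1 p q 0 hp hq le_rfl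
    norm_num at e3 e2 e1
    rw [e3, e2, e1, hneg p q (-1) (by omega)]
    abel
  -- r ≥ 4
  have e3 := hrec3 p q (r-1) hp hq (by omega)
  have e2 := hrec2 p q (r-2) hp hq (by omega)
  have e1 := hrec1 p q (r-3) hp hq (by omega)
  rw [show r-1+1 = r by ring, show r-1-1 = r-2 by ring] at e3
  rw [show r-2+1 = r-1 by ring, show r-2-1 = r-3 by ring] at e2
  rw [show r-3+1 = r-2 by ring, show r-3-1 = r-4 by ring] at e1
  rw [e3, e2, e1, if_neg (by omega : ¬ r = 0), if_neg (by omega : ¬ r = 1),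
    if_neg (by omega : ¬ r = 2)]
  simp only [add_zero]
  abel
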